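/- Let a < 0, k₋ = √(-a/2), A_T < k₋, and let A(t) = -k₋ · ((A_T - k₋)·exp(4k₋(T - t)) + (A_T + k₋)) / ((A_T - k₋)·exp(4k₋(T - t)) - (A_T + k₋)) be the solution of the Riccati equation A' = -a - 2A² with A(T) = A_T. Then A(t) converges to the equilibrium value -k₋ as t → -∞; more precisely, A(t) + k₋ = -2k₋(A_T + k₋)·exp(-4k₋(T - t)) / ((A_T - k₋) - (A_T + k₋)·exp(-4k₋(T - t))), which tends to 0 as t → -∞. -/

import Mathlib

open Filter

/-- For `a < 0`, `k₋ = √(-a/2)`, `A_T < k₋`, the explicit solution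
`A(t) = -k₋ ((A_T - k₋) e^{4k₋(T-t)} + (A_T + k₋)) / ((A_T - k₋) e^{4k₋(T-t)} - (A_T + k₋))`
of the Riccati equation `A' = -a - 2A²`, `A(T) = A_T`, converges to the stable
equilibrium `-k₋` as `t → -∞`; more precisely, for `t ≤ T`,
`A(t) + k₋ = -2k₋(A_T + k₋) e^{-4k₋(T-t)} / ((A_T - k₋) - (A_T + k₋) e^{-4k₋(T-t)})`,
which tends to `0` as `t → -∞`. -/
theorem riccati_convergence_to_equilibrium
    (a T A_T k : ℝ) (ha : a < 0) (hk : k = Real.sqrt (-a / 2)) (hAT : A_T < k)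
    (A : ℝ → ℝ)
    (hA : ∀ t : ℝ, A t =
      -k * ((A_T - k) * Real.exp (4 * k * (T - t)) + (A_T + k)) /
        ((A_T - k) * Real.exp (4 * k * (T - t)) - (A_T + k))) :
    (∀ t ≤ T, A t + k =
      -2 * k * (A_T + k) * Real.exp (-(4 * k * (T - t))) /
        ((A_T - k) - (A_T + k) * Real.exp (-(4 * k * (T - t))))) ∧
    Tendsto (fun t => A t + k) atBot (nhds 0) := by
  have hk0 : 0 < k := by
    rw [hk]; exact Real.sqrt_pos.mpr (by linarith)
  have hD : ∀ t ≤ T, (A_T - k) * Real.exp (4 * k * (T - t)) - (A_T + k) < 0 := by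
    intro t ht
    have hE1 : 1 ≤ Real.exp (4 * k * (T - t)) :=
      Real.one_le_exp (by nlinarith)
    nlinarith [hE1]
  have key : ∀ t ≤ T, A t + k =
      -2 * k * (A_T + k) * Real.exp (-(4 * k * (T - t))) /
        ((A_T - k) - (A_T + k) * Real.exp (-(4 * k * (T - t)))) := by
    intro t ht
    have hDne : (A_T - k) * Real.exp (4 * k * (T - t)) - (A_T + k) ≠ 0 :=
      ne_of_lt (hD t ht)
    have hEne : Real.exp (4 * k * (T - t)) ≠ 0 := Real.exp_ne_zero _
    have hE : Real.exp (-(4 * k * (T - t))) = (Real.exp (4 * k * (T - t)))⁻¹ :=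
      Real.exp_neg _
    have hD2ne : (A_T - k) - (A_T + k) * (Real.exp (4 * k * (T - t)))⁻¹ ≠ 0 := by
      have : (A_T - k) - (A_T + k) * (Real.exp (4 * k * (T - t)))⁻¹ =
          ((A_T - k) * Real.exp (4 * k * (T - t)) - (A_T + k)) *
            (Real.exp (4 * k * (T - t)))⁻¹ := by
        field_simp
      rw [this]
      exact mul_ne_zero hDne (inv_ne_zero hEne)
    rw [hA, hE]
    rw [div_add' _ _ _ hDne, div_eq_div_iff hDne hD2ne]
    field_simp
    ring
  refine ⟨key, ?_⟩
  have heps : Tendsto (fun t => Real.exp (-(4 * k * (T - t)))) atBot (nhds 0) := by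
    have h1 : Tendsto (fun t : ℝ => 4 * k * t) atBot atBot :=
      tendsto_id.const_mul_atBot (by linarith : (0:ℝ) < 4 * k)
    have h2 : Tendsto (fun t : ℝ => -(4 * k * (T - t))) atBot atBot := by
      refine (tendsto_atBot_add_const_right atBot (-(4 * k * T)) h1).congr (fun x => by ring)
    exact Real.tendsto_exp_atBot.comp h2
  have hgoal : Tendsto (fun t => -2 * k * (A_T + k) * Real.exp (-(4 * k * (T - t))) /
        ((A_T - k) - (A_T + k) * Real.exp (-(4 * k * (T - t))))) atBot (nhds 0) := by
    have hnum : Tendsto (fun t => -2 * k * (A_T + k) * Real.exp (-(4 * k * (T - t))))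
        atBot (nhds 0) := by
      simpa using heps.const_mul (-2 * k * (A_T + k))
    have hden : Tendsto (fun t => (A_T - k) - (A_T + k) * Real.exp (-(4 * k * (T - t))))
        atBot (nhds (A_T - k)) := by
      simpa using tendsto_const_nhds.sub (heps.const_mul (A_T + k))
    have hq := hnum.div hden (by linarith : A_T - k ≠ 0)
    rw [zero_div] at hq
    exact hq
  refine hgoal.congr' ?_
  filter_upwards [eventually_le_atBot T] with t ht
  exact (key t ht).symm
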